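/- Surjectivity half of the main theorem: Let F : G → H be a weak equivalence of cosimplicial crossed groupoids. Then for every descent datum (y, h, b) in H there exists a descent datum (x, g, a) in G and a gauge transformation (y, h, b) → F(x, g, a) in H. Hence the induced map on gauge equivalence classes, Desc-bar(F) : Desc-bar(G) → Desc-bar(H), is surjective. -/

import Mathlib

/-! Crossed groupoids (= crossed modules over groupoids), following Yekutieli,
"Combinatorial descent data for gerbes". -/

structure CrossedGroupoid : Type 1 where
  Obj : Type
  Hom : Obj → Obj → Type
  id : ∀ x, Hom x x
  comp : ∀ {x y z}, Hom y z → Hom x y → Hom x z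
  inv : ∀ {x y}, Hom x y → Hom y x
  comp_assoc : ∀ {x y z w} (h : Hom z w) (g : Hom y z) (f : Hom x y),
    comp (comp h g) f = comp h (comp g f)
  id_comp : ∀ {x y} (f : Hom x y), comp (id y) f = f
  comp_id : ∀ {x y} (f : Hom x y), comp f (id x) = f
  inv_comp : ∀ {x y} (f : Hom x y), comp (inv f) f = id x
  comp_inv : ∀ {x y} (f : Hom x y), comp f (inv f) = id y
  -- the totally disconnected groupoid 𝒢₂, i.e. a family of groups
  G2 : Obj → Type
  mul : ∀ {x}, G2 x → G2 x → G2 x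
  one : ∀ x, G2 x
  inv2 : ∀ {x}, G2 x → G2 x
  mul_assoc : ∀ {x} (a b c : G2 x), mul (mul a b) c = mul a (mul b c)
  one_mul : ∀ {x} (a : G2 x), mul (one x) a = a
  mul_one : ∀ {x} (a : G2 x), mul a (one x) = a
  inv2_mul : ∀ {x} (a : G2 x), mul (inv2 a) a = one x
  -- the twisting: an action of 𝒢₁ on 𝒢₂
  Ad : ∀ {x y}, Hom x y → G2 x → G2 y
  Ad_mul : ∀ {x y} (g : Hom x y) (a b : G2 x), Ad g (mul a b) = mul (Ad g a) (Ad g b)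
  Ad_one : ∀ {x y} (g : Hom x y), Ad g (one x) = one y
  Ad_id : ∀ {x} (a : G2 x), Ad (id x) a = a
  Ad_comp : ∀ {x y z} (h : Hom y z) (g : Hom x y) (a : G2 x),
    Ad (comp h g) a = Ad h (Ad g a)
  -- the feedback D : 𝒢₂ → 𝒢₁, identity on objects
  D : ∀ {x}, G2 x → Hom x x
  D_mul : ∀ {x} (a b : G2 x), D (mul a b) = comp (D a) (D b)
  D_one : ∀ x, D (one x) = id x
  -- equivariance of the feedback
  D_Ad : ∀ {x y} (g : Hom x y) (a : G2 x), D (Ad g a) = comp (comp g (D a)) (inv g)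
  -- Peiffer condition
  peiffer : ∀ {x} (a b : G2 x), Ad (D a) b = mul (mul a b) (inv2 a)

namespace CrossedGroupoid

/-- Transport of 1-morphisms along equalities of objects. -/
def hcast (G : CrossedGroupoid) {x x' y y' : G.Obj} (ex : x = x') (ey : y = y')
    (f : G.Hom x y) : G.Hom x' y' := ey ▸ ex ▸ f

/-- Transport of 2-morphisms along an equality of objects. -/
def cast2 (G : CrossedGroupoid) {x x' : G.Obj} (e : x = x') (a : G.G2 x) : G.G2 x' := e ▸ a

/-- The relation "isomorphic in 𝒢₁". -/
def pi0Rel (G : CrossedGroupoid) : G.Obj → G.Obj → Prop := fun x y => Nonempty (G.Hom x y)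

/-- π₀ of a crossed groupoid: isomorphism classes of objects of 𝒢₁. -/
def pi0 (G : CrossedGroupoid) : Type := Quot G.pi0Rel

/-- The right action relation on a hom-set: g' = g ∘ D(a). -/
def homRel (G : CrossedGroupoid) (x x' : G.Obj) : G.Hom x x' → G.Hom x x' → Prop :=
  fun g g' => ∃ a : G.G2 x, g' = G.comp g (G.D a)

/-- π₁(G, x, x') := 𝒢₁(x,x') / 𝒢₂(x). -/
def pi1' (G : CrossedGroupoid) (x x' : G.Obj) : Type := Quot (G.homRel x x')

/-- π₁(G, x) = Coker(D : 𝒢₂(x) → 𝒢₁(x)) as a quotient set. -/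
def pi1 (G : CrossedGroupoid) (x : G.Obj) : Type := G.pi1' x x

/-- π₂(G, x) = Ker(D : 𝒢₂(x) → 𝒢₁(x)). -/
def pi2 (G : CrossedGroupoid) (x : G.Obj) : Type := {a : G.G2 x // G.D a = G.id x}

end CrossedGroupoid

/-- A morphism of crossed groupoids. -/
structure CrossedGroupoidHom (G H : CrossedGroupoid) where
  obj : G.Obj → H.Obj
  map1 : ∀ {x y : G.Obj}, G.Hom x y → H.Hom (obj x) (obj y)
  map2 : ∀ {x : G.Obj}, G.G2 x → H.G2 (obj x)
  map1_comp : ∀ {x y z : G.Obj} (g : G.Hom y z) (f : G.Hom x y),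
    map1 (G.comp g f) = H.comp (map1 g) (map1 f)
  map1_id : ∀ x : G.Obj, map1 (G.id x) = H.id (obj x)
  map2_mul : ∀ {x : G.Obj} (a b : G.G2 x), map2 (G.mul a b) = H.mul (map2 a) (map2 b)
  map_D : ∀ {x : G.Obj} (a : G.G2 x), map1 (G.D a) = H.D (map2 a)
  map_Ad : ∀ {x y : G.Obj} (g : G.Hom x y) (a : G.G2 x),
    map2 (G.Ad g a) = H.Ad (map1 g) (map2 a)

namespace CrossedGroupoidHom

/-- Identity morphism of crossed groupoids. -/
def id (G : CrossedGroupoid) : CrossedGroupoidHom G G where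
  obj := fun x => x
  map1 := fun f => f
  map2 := fun a => a
  map1_comp := fun _ _ => rfl
  map1_id := fun _ => rfl
  map2_mul := fun _ _ => rfl
  map_D := fun _ => rfl
  map_Ad := fun _ _ => rfl

/-- Composition of morphisms of crossed groupoids. -/
def comp {G H K : CrossedGroupoid} (F₂ : CrossedGroupoidHom H K) (F₁ : CrossedGroupoidHom G H) :
    CrossedGroupoidHom G K where
  obj := fun x => F₂.obj (F₁.obj x)
  map1 := fun f => F₂.map1 (F₁.map1 f)
  map2 := fun a => F₂.map2 (F₁.map2 a)
  map1_comp := fun g f => by (try dsimp only); rw [F₁.map1_comp, F₂.map1_comp]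
  map1_id := fun x => by (try dsimp only); rw [F₁.map1_id, F₂.map1_id]
  map2_mul := fun a b => by (try dsimp only); rw [F₁.map2_mul, F₂.map2_mul]
  map_D := fun a => by (try dsimp only); rw [F₁.map_D, F₂.map_D]
  map_Ad := fun g a => by (try dsimp only); rw [F₁.map_Ad, F₂.map_Ad]

variable {G H : CrossedGroupoid}

/-- The induced map on π₀. -/
def pi0map (F : CrossedGroupoidHom G H) : G.pi0 → H.pi0 :=
  Quot.map F.obj (fun _ _ h => ⟨F.map1 h.some⟩)

/-- The induced map on π₁(−, x, x'). -/
def pi1'map (F : CrossedGroupoidHom G H) (x x' : G.Obj) :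
    G.pi1' x x' → H.pi1' (F.obj x) (F.obj x') :=
  Quot.map F.map1 (by
    rintro g g' ⟨a, rfl⟩
    exact ⟨F.map2 a, by rw [F.map1_comp, F.map_D]⟩)

/-- The induced map on π₁(−, x). -/
def pi1map (F : CrossedGroupoidHom G H) (x : G.Obj) : G.pi1 x → H.pi1 (F.obj x) :=
  F.pi1'map x x

/-- The induced map on π₂(−, x). -/
def pi2map (F : CrossedGroupoidHom G H) (x : G.Obj) : G.pi2 x → H.pi2 (F.obj x) :=
  fun a => ⟨F.map2 a.1, by rw [← F.map_D, a.2, F.map1_id]⟩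

/-- A weak equivalence of crossed groupoids: bijective on π₀, π₁ and π₂. -/
def IsWeakEquiv (F : CrossedGroupoidHom G H) : Prop :=
  Function.Bijective F.pi0map ∧ (∀ x, Function.Bijective (F.pi1map x)) ∧
    (∀ x, Function.Bijective (F.pi2map x))

end CrossedGroupoidHom

/-! ### Combinatorics of the simplex category -/

/-- The vertex (i) of Δ^q, as a monotone map Δ⁰ → Δ^q. -/
def vtxMap {q : ℕ} (i : Fin (q + 1)) : Fin 1 →o Fin (q + 1) :=
  ⟨fun _ => i, fun _ _ _ => le_rfl⟩

/-- The edge (i,j) of Δ^q, as a monotone map Δ¹ → Δ^q. -/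
def edgeMap {q : ℕ} (i j : Fin (q + 1)) (h : i ≤ j) : Fin 2 →o Fin (q + 1) :=
  ⟨fun k => if (k : ℕ) = 0 then i else j, by
    intro a b hab
    have hab' : (a : ℕ) ≤ (b : ℕ) := hab
    show (if (a : ℕ) = 0 then i else j) ≤ (if (b : ℕ) = 0 then i else j)
    by_cases ha : (a : ℕ) = 0
    · by_cases hb : (b : ℕ) = 0
      · rw [if_pos ha, if_pos hb]
      · rw [if_pos ha, if_neg hb]; exact h
    · have hb : ¬ (b : ℕ) = 0 := fun hb0 => ha (Nat.le_zero.mp (hb0 ▸ hab'))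
      rw [if_neg ha, if_neg hb]⟩

/-- The triangle (i,j,k) of Δ^q, as a monotone map Δ² → Δ^q. -/
def triMap {q : ℕ} (i j k : Fin (q + 1)) (hij : i ≤ j) (hjk : j ≤ k) :
    Fin 3 →o Fin (q + 1) :=
  ⟨fun m => if (m : ℕ) = 0 then i else if (m : ℕ) = 1 then j else k, by
    intro a b hab
    have hab' : (a : ℕ) ≤ (b : ℕ) := hab
    show (if (a : ℕ) = 0 then i else if (a : ℕ) = 1 then j else k) ≤
      (if (b : ℕ) = 0 then i else if (b : ℕ) = 1 then j else k)
    by_cases ha0 : (a : ℕ) = 0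
    · by_cases hb0 : (b : ℕ) = 0
      · rw [if_pos ha0, if_pos hb0]
      · by_cases hb1 : (b : ℕ) = 1
        · rw [if_pos ha0, if_neg hb0, if_pos hb1]; exact hij
        · rw [if_pos ha0, if_neg hb0, if_neg hb1]; exact hij.trans hjk
    · by_cases ha1 : (a : ℕ) = 1
      · have hb0 : ¬ (b : ℕ) = 0 := by omega
        by_cases hb1 : (b : ℕ) = 1
        · rw [if_neg ha0, if_pos ha1, if_neg hb0, if_pos hb1]
        · rw [if_neg ha0, if_pos ha1, if_neg hb0, if_neg hb1]; exact hjk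
      · have hb0 : ¬ (b : ℕ) = 0 := by omega
        have hb1 : ¬ (b : ℕ) = 1 := by omega
        rw [if_neg ha0, if_neg ha1, if_neg hb0, if_neg hb1]⟩

theorem comp_vtxMap {p q : ℕ} (α : Fin (p + 1) →o Fin (q + 1)) (i : Fin (p + 1)) :
    α.comp (vtxMap i) = vtxMap (α i) := rfl

/-! ### Cosimplicial crossed groupoids -/

/-- A cosimplicial crossed groupoid: a functor Δ → CrGrpd. -/
structure CosimplicialCrossedGroupoid : Type 1 where
  obj : ℕ → CrossedGroupoid
  map : ∀ {p q : ℕ}, (Fin (p + 1) →o Fin (q + 1)) → CrossedGroupoidHom (obj p) (obj q)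
  map_id : ∀ p, map (OrderHom.id : Fin (p + 1) →o Fin (p + 1)) = CrossedGroupoidHom.id (obj p)
  map_comp : ∀ {p q r : ℕ} (β : Fin (q + 1) →o Fin (r + 1)) (α : Fin (p + 1) →o Fin (q + 1)),
    map (β.comp α) = (map β).comp (map α)

namespace CosimplicialCrossedGroupoid

variable (G : CosimplicialCrossedGroupoid)

theorem obj_comp {p q r : ℕ} (β : Fin (q + 1) →o Fin (r + 1)) (α : Fin (p + 1) →o Fin (q + 1))
    (x : (G.obj p).Obj) :
    (G.map β).obj ((G.map α).obj x) = (G.map (β.comp α)).obj x := by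
  rw [G.map_comp]; rfl

/-- The object x of G⁰ pushed to the vertex (i) of Δ^q. -/
def X (x : (G.obj 0).Obj) (q : ℕ) (i : Fin (q + 1)) : (G.obj q).Obj :=
  (G.map (vtxMap i)).obj x

theorem X_push (x : (G.obj 0).Obj) {p q : ℕ} (α : Fin (p + 1) →o Fin (q + 1))
    (i : Fin (p + 1)) : (G.map α).obj (G.X x p i) = G.X x q (α i) := by
  unfold X
  rw [obj_comp, comp_vtxMap]

/-- Pushing a 1-morphism between vertex objects along α. -/
def push1 {x : (G.obj 0).Obj} {p q : ℕ} (α : Fin (p + 1) →o Fin (q + 1))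
    {i j : Fin (p + 1)} (g : (G.obj p).Hom (G.X x p i) (G.X x p j)) :
    (G.obj q).Hom (G.X x q (α i)) (G.X x q (α j)) :=
  (G.obj q).hcast (G.X_push x α i) (G.X_push x α j) ((G.map α).map1 g)

/-- Pushing a 2-morphism at a vertex object along α. -/
def push2 {x : (G.obj 0).Obj} {p q : ℕ} (α : Fin (p + 1) →o Fin (q + 1))
    {i : Fin (p + 1)} (a : (G.obj p).G2 (G.X x p i)) :
    (G.obj q).G2 (G.X x q (α i)) :=
  (G.obj q).cast2 (G.X_push x α i) ((G.map α).map2 a)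

/-- Yekutieli's combinatorial descent conditions (Definition 1.5):
the failure-of-1-cocycle condition and the twisted 2-cocycle condition. -/
def IsDescent (x : (G.obj 0).Obj)
    (g : (G.obj 1).Hom (G.X x 1 0) (G.X x 1 1))
    (a : (G.obj 2).G2 (G.X x 2 0)) : Prop :=
  ((G.obj 2).comp ((G.obj 2).comp ((G.obj 2).inv (G.push1 (edgeMap 0 2 (by decide)) g))
      (G.push1 (edgeMap 1 2 (by decide)) g)) (G.push1 (edgeMap 0 1 (by decide)) g)
    = (G.obj 2).D a)
  ∧
  ((G.obj 3).mul ((G.obj 3).mul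
        ((G.obj 3).inv2 (G.push2 (triMap 0 1 3 (by decide) (by decide)) a))
        (G.push2 (triMap 0 2 3 (by decide) (by decide)) a))
      (G.push2 (triMap 0 1 2 (by decide) (by decide)) a)
    = (G.obj 3).Ad ((G.obj 3).inv (G.push1 (edgeMap 0 1 (by decide)) g))
        (G.push2 (triMap 1 2 3 (by decide) (by decide)) a))

/-- A combinatorial descent datum (Definition 1.5). -/
structure Desc (G : CosimplicialCrossedGroupoid) where
  x : (G.obj 0).Obj
  g : (G.obj 1).Hom (G.X x 1 0) (G.X x 1 1)
  a : (G.obj 2).G2 (G.X x 2 0)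
  isDescent : G.IsDescent x g a

/-- The Yekutieli gauge-transformation conditions (Definition 1.7) for a pair (f, c). -/
def IsGauge (x : (G.obj 0).Obj) (g : (G.obj 1).Hom (G.X x 1 0) (G.X x 1 1))
    (a : (G.obj 2).G2 (G.X x 2 0))
    (x' : (G.obj 0).Obj) (g' : (G.obj 1).Hom (G.X x' 1 0) (G.X x' 1 1))
    (a' : (G.obj 2).G2 (G.X x' 2 0))
    (f : (G.obj 0).Hom x x') (c : (G.obj 1).G2 (G.X x 1 0)) : Prop :=
  (g' = (G.obj 1).comp ((G.obj 1).comp ((G.obj 1).comp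
      ((G.map (vtxMap (1 : Fin 2))).map1 f) g) ((G.obj 1).D c))
      ((G.obj 1).inv ((G.map (vtxMap (0 : Fin 2))).map1 f)))
  ∧
  (a' = (G.obj 2).Ad ((G.map (vtxMap (0 : Fin 3))).map1 f)
    ((G.obj 2).mul ((G.obj 2).mul ((G.obj 2).mul
        ((G.obj 2).inv2 (G.push2 (edgeMap 0 2 (by decide)) c)) a)
        ((G.obj 2).Ad ((G.obj 2).inv (G.push1 (edgeMap 0 1 (by decide)) g))
          (G.push2 (edgeMap 1 2 (by decide)) c)))
      (G.push2 (edgeMap 0 1 (by decide)) c)))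

/-- Gauge equivalence of descent data. -/
def GaugeEquiv (P Q : G.Desc) : Prop :=
  ∃ (f : (G.obj 0).Hom P.x Q.x) (c : (G.obj 1).G2 (G.X P.x 1 0)),
    G.IsGauge P.x P.g P.a Q.x Q.g Q.a f c

/-- The explicit formula for the transported 2-morphism a'
(Definition 1.7(ii) / Lemma 1.9). -/
def transportA {x x' : (G.obj 0).Obj} (f : (G.obj 0).Hom x x')
    (g : (G.obj 1).Hom (G.X x 1 0) (G.X x 1 1))
    (a : (G.obj 2).G2 (G.X x 2 0)) (c : (G.obj 1).G2 (G.X x 1 0)) :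
    (G.obj 2).G2 (G.X x' 2 0) :=
  (G.obj 2).Ad ((G.map (vtxMap (0 : Fin 3))).map1 f)
    ((G.obj 2).mul ((G.obj 2).mul ((G.obj 2).mul
        ((G.obj 2).inv2 (G.push2 (edgeMap 0 2 (by decide)) c)) a)
        ((G.obj 2).Ad ((G.obj 2).inv (G.push1 (edgeMap 0 1 (by decide)) g))
          (G.push2 (edgeMap 1 2 (by decide)) c)))
      (G.push2 (edgeMap 0 1 (by decide)) c))

end CosimplicialCrossedGroupoid

/-- A morphism of cosimplicial crossed groupoids. -/
structure CosimplicialMor (G H : CosimplicialCrossedGroupoid) where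
  app : ∀ p, CrossedGroupoidHom (G.obj p) (H.obj p)
  naturality : ∀ {p q : ℕ} (α : Fin (p + 1) →o Fin (q + 1)),
    (app q).comp (G.map α) = (H.map α).comp (app p)

namespace CosimplicialMor

variable {G H : CosimplicialCrossedGroupoid}

theorem app_X (F : CosimplicialMor G H) (x : (G.obj 0).Obj) (q : ℕ) (i : Fin (q + 1)) :
    (F.app q).obj (G.X x q i) = H.X ((F.app 0).obj x) q i :=
  congrFun (congrArg CrossedGroupoidHom.obj (F.naturality (vtxMap i))) x

/-- Image of an object of G⁰. -/
def objD (F : CosimplicialMor G H) (x : (G.obj 0).Obj) : (H.obj 0).Obj := (F.app 0).obj x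

/-- Image of a 1-morphism in dimension 0. -/
def mapF (F : CosimplicialMor G H) {x x' : (G.obj 0).Obj} (f : (G.obj 0).Hom x x') :
    (H.obj 0).Hom (F.objD x) (F.objD x') := (F.app 0).map1 f

/-- Image of the 1-morphism part of a descent datum. -/
def mapG (F : CosimplicialMor G H) {x : (G.obj 0).Obj}
    (g : (G.obj 1).Hom (G.X x 1 0) (G.X x 1 1)) :
    (H.obj 1).Hom (H.X (F.objD x) 1 0) (H.X (F.objD x) 1 1) :=
  (H.obj 1).hcast (F.app_X x 1 0) (F.app_X x 1 1) ((F.app 1).map1 g)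

/-- Image of the 2-morphism part of a descent datum. -/
def mapA (F : CosimplicialMor G H) {x : (G.obj 0).Obj} (a : (G.obj 2).G2 (G.X x 2 0)) :
    (H.obj 2).G2 (H.X (F.objD x) 2 0) :=
  (H.obj 2).cast2 (F.app_X x 2 0) ((F.app 2).map2 a)

/-- Image of the 2-morphism part of a gauge transformation. -/
def mapC (F : CosimplicialMor G H) {x : (G.obj 0).Obj} (c : (G.obj 1).G2 (G.X x 1 0)) :
    (H.obj 1).G2 (H.X (F.objD x) 1 0) :=
  (H.obj 1).cast2 (F.app_X x 1 0) ((F.app 1).map2 c)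

/-- A weak equivalence of cosimplicial crossed groupoids. -/
def IsWeakEquiv (F : CosimplicialMor G H) : Prop := ∀ p, (F.app p).IsWeakEquiv

end CosimplicialMor

/-! ### Auxiliary lemmas: groupoid algebra, group structure on G2, cast calculus -/

namespace CrossedGroupoid

variable {K : CrossedGroupoid}

instance instGroupG2 (K : CrossedGroupoid) (X : K.Obj) : Group (K.G2 X) where
  mul := K.mul
  one := K.one X
  inv := K.inv2
  mul_assoc := K.mul_assoc
  one_mul := K.one_mul
  mul_one := K.mul_one
  inv_mul_cancel := K.inv2_mul

theorem mul_def {X : K.Obj} (a b : K.G2 X) : K.mul a b = a * b := rfl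
theorem one_def (X : K.Obj) : K.one X = 1 := rfl
theorem inv2_def {X : K.Obj} (a : K.G2 X) : K.inv2 a = a⁻¹ := rfl

/-- `Ad g` as a group homomorphism. -/
def AdHom {x y : K.Obj} (g : K.Hom x y) : K.G2 x →* K.G2 y where
  toFun := K.Ad g
  map_one' := K.Ad_one g
  map_mul' := K.Ad_mul g

theorem Ad_def {x y : K.Obj} (g : K.Hom x y) (a : K.G2 x) : K.Ad g a = K.AdHom g a := rfl

theorem Ad_inv2 {x y : K.Obj} (g : K.Hom x y) (a : K.G2 x) :
    K.Ad g (K.inv2 a) = K.inv2 (K.Ad g a) := by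
  rw [Ad_def, Ad_def, inv2_def, inv2_def, map_inv]

-- groupoid lemmas
theorem inv_inv' {x y : K.Obj} (f : K.Hom x y) : K.inv (K.inv f) = f := by
  have h := K.comp_inv f
  calc K.inv (K.inv f) = K.comp (K.inv (K.inv f)) (K.comp (K.inv f) f) := by
        rw [K.inv_comp, K.comp_id]
    _ = f := by rw [← K.comp_assoc, K.inv_comp, K.id_comp]

theorem inv_comp' {x y z : K.Obj} (g : K.Hom y z) (f : K.Hom x y) :
    K.inv (K.comp g f) = K.comp (K.inv f) (K.inv g) := by
  have : K.comp (K.comp (K.inv f) (K.inv g)) (K.comp g f) = K.id x := by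
    rw [K.comp_assoc, ← K.comp_assoc (K.inv g) g f, K.inv_comp, K.id_comp, K.inv_comp]
  calc K.inv (K.comp g f)
      = K.comp (K.comp (K.comp (K.inv f) (K.inv g)) (K.comp g f)) (K.inv (K.comp g f)) := by
        rw [this, K.id_comp]
    _ = K.comp (K.inv f) (K.inv g) := by rw [K.comp_assoc, K.comp_inv, K.comp_id]

theorem inv_id (x : K.Obj) : K.inv (K.id x) = K.id x := by
  have := K.inv_comp (K.id x); rwa [K.comp_id] at this

theorem D_inv2 {x : K.Obj} (a : K.G2 x) : K.D (K.inv2 a) = K.inv (K.D a) := by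
  have h : K.comp (K.D (K.inv2 a)) (K.D a) = K.id x := by
    rw [← K.D_mul, K.inv2_mul, K.D_one]
  calc K.D (K.inv2 a) = K.comp (K.D (K.inv2 a)) (K.comp (K.D a) (K.inv (K.D a))) := by
        rw [K.comp_inv, K.comp_id]
    _ = K.inv (K.D a) := by rw [← K.comp_assoc, h, K.id_comp]

/-! cast calculus -/

@[simp] theorem hcast_rfl {x y : K.Obj} (f : K.Hom x y) : K.hcast rfl rfl f = f := rfl

@[simp] theorem cast2_rfl {x : K.Obj} (a : K.G2 x) : K.cast2 rfl a = a := rfl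

theorem hcast_hcast {x x' x'' y y' y'' : K.Obj} (ex : x = x') (ey : y = y')
    (ex' : x' = x'') (ey' : y' = y'') (f : K.Hom x y) :
    K.hcast ex' ey' (K.hcast ex ey f) = K.hcast (ex.trans ex') (ey.trans ey') f := by
  subst ex ey ex' ey'; rfl

theorem cast2_cast2 {x x' x'' : K.Obj} (e : x = x') (e' : x' = x'') (a : K.G2 x) :
    K.cast2 e' (K.cast2 e a) = K.cast2 (e.trans e') a := by subst e e'; rfl

theorem comp_hcast {x y z x' y' z' : K.Obj} (ex : x = x') (ey : y = y') (ez : z = z')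
    (g : K.Hom y z) (f : K.Hom x y) :
    K.comp (K.hcast ey ez g) (K.hcast ex ey f) = K.hcast ex ez (K.comp g f) := by
  subst ex ey ez; rfl

theorem inv_hcast {x y x' y' : K.Obj} (ex : x = x') (ey : y = y') (f : K.Hom x y) :
    K.inv (K.hcast ex ey f) = K.hcast ey ex (K.inv f) := by subst ex ey; rfl

theorem D_cast2 {x x' : K.Obj} (e : x = x') (a : K.G2 x) :
    K.D (K.cast2 e a) = K.hcast e e (K.D a) := by subst e; rfl

theorem mul_cast2 {x x' : K.Obj} (e : x = x') (a b : K.G2 x) :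
    K.mul (K.cast2 e a) (K.cast2 e b) = K.cast2 e (K.mul a b) := by subst e; rfl

theorem inv2_cast2 {x x' : K.Obj} (e : x = x') (a : K.G2 x) :
    K.inv2 (K.cast2 e a) = K.cast2 e (K.inv2 a) := by subst e; rfl

theorem Ad_hcast {x y x' y' : K.Obj} (ex : x = x') (ey : y = y') (g : K.Hom x y)
    (a : K.G2 x) :
    K.Ad (K.hcast ex ey g) (K.cast2 ex a) = K.cast2 ey (K.Ad g a) := by subst ex ey; rfl

theorem cast2_refl' {x : K.Obj} (e : x = x) (a : K.G2 x) : K.cast2 e a = a := rfl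

theorem cast2_inj {x x' : K.Obj} (e : x = x') {a b : K.G2 x} :
    K.cast2 e a = K.cast2 e b ↔ a = b := by subst e; rfl

theorem hcast_inj {x y x' y' : K.Obj} (ex : x = x') (ey : y = y') {f g : K.Hom x y} :
    K.hcast ex ey f = K.hcast ex ey g ↔ f = g := by subst ex ey; rfl

theorem id_heq {x x' : K.Obj} (e : x = x') : K.hcast e e (K.id x) = K.id x' := by subst e; rfl

end CrossedGroupoid

namespace CrossedGroupoidHom

theorem map1_hcast {G H : CrossedGroupoid} (F : CrossedGroupoidHom G H)
    {x y x' y' : G.Obj} (ex : x = x') (ey : y = y') (f : G.Hom x y) :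
    F.map1 (G.hcast ex ey f) = H.hcast (congrArg F.obj ex) (congrArg F.obj ey) (F.map1 f) := by
  subst ex ey; rfl

theorem map2_cast2 {G H : CrossedGroupoid} (F : CrossedGroupoidHom G H)
    {x x' : G.Obj} (e : x = x') (a : G.G2 x) :
    F.map2 (G.cast2 e a) = H.cast2 (congrArg F.obj e) (F.map2 a) := by subst e; rfl

theorem map1_congr {G H : CrossedGroupoid} {F F' : CrossedGroupoidHom G H}
    (h : F = F') {x y : G.Obj} (f : G.Hom x y) :
    F'.map1 f = H.hcast (congrFun (congrArg obj h) x) (congrFun (congrArg obj h) y)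
      (F.map1 f) := by subst h; rfl

theorem map2_congr {G H : CrossedGroupoid} {F F' : CrossedGroupoidHom G H}
    (h : F = F') {x : G.Obj} (a : G.G2 x) :
    F'.map2 a = H.cast2 (congrFun (congrArg obj h) x) (F.map2 a) := by subst h; rfl

theorem map1_inv {G H : CrossedGroupoid} (F : CrossedGroupoidHom G H)
    {x y : G.Obj} (f : G.Hom x y) : F.map1 (G.inv f) = H.inv (F.map1 f) := by
  have h : H.comp (F.map1 (G.inv f)) (F.map1 f) = H.id (F.obj x) := by
    rw [← F.map1_comp, G.inv_comp, F.map1_id]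
  calc F.map1 (G.inv f)
      = H.comp (F.map1 (G.inv f)) (H.comp (F.map1 f) (H.inv (F.map1 f))) := by
        rw [H.comp_inv, H.comp_id]
    _ = H.inv (F.map1 f) := by rw [← H.comp_assoc, h, H.id_comp]

theorem map2_one {G H : CrossedGroupoid} (F : CrossedGroupoidHom G H) (x : G.Obj) :
    F.map2 (G.one x) = H.one (F.obj x) := by
  have h : F.map2 (G.one x) * F.map2 (G.one x) = F.map2 (G.one x) := by
    rw [← CrossedGroupoid.mul_def, ← F.map2_mul, G.one_mul]
  rw [CrossedGroupoid.one_def]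
  exact mul_eq_left.mp h

theorem map2_inv2 {G H : CrossedGroupoid} (F : CrossedGroupoidHom G H)
    {x : G.Obj} (a : G.G2 x) : F.map2 (G.inv2 a) = H.inv2 (F.map2 a) := by
  have h : H.mul (F.map2 (G.inv2 a)) (F.map2 a) = H.one (F.obj x) := by
    rw [← F.map2_mul, G.inv2_mul, F.map2_one]
  rw [CrossedGroupoid.mul_def, CrossedGroupoid.one_def] at h
  show F.map2 (G.inv2 a) = (F.map2 a)⁻¹
  exact eq_inv_of_mul_eq_one_left h

end CrossedGroupoidHom
/-! ### Push calculus for cosimplicial crossed groupoids -/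

attribute [reducible] CosimplicialCrossedGroupoid.X
attribute [reducible] edgeMap triMap CosimplicialMor.objD

namespace CosimplicialCrossedGroupoid

open CrossedGroupoid CrossedGroupoidHom

variable (G : CosimplicialCrossedGroupoid)

/-- Push of a 1-morphism between vertex objects over possibly different base objects. -/
def push1'' {x x' : (G.obj 0).Obj} {p q : ℕ} (α : Fin (p + 1) →o Fin (q + 1))
    {i j : Fin (p + 1)} (g : (G.obj p).Hom (G.X x p i) (G.X x' p j)) :
    (G.obj q).Hom (G.X x q (α i)) (G.X x' q (α j)) :=
  (G.obj q).hcast (G.X_push x α i) (G.X_push x' α j) ((G.map α).map1 g)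

theorem push1_eq_push1'' {x : (G.obj 0).Obj} {p q : ℕ} (α : Fin (p + 1) →o Fin (q + 1))
    {i j : Fin (p + 1)} (g : (G.obj p).Hom (G.X x p i) (G.X x p j)) :
    G.push1 α g = G.push1'' α g := rfl

variable {x x' : (G.obj 0).Obj} {p q : ℕ} (α : Fin (p + 1) →o Fin (q + 1))

theorem push1''_comp {x'' : (G.obj 0).Obj} {i j k : Fin (p + 1)}
    (g : (G.obj p).Hom (G.X x' p j) (G.X x'' p k))
    (f : (G.obj p).Hom (G.X x p i) (G.X x' p j)) :
    G.push1'' α ((G.obj p).comp g f) = (G.obj q).comp (G.push1'' α g) (G.push1'' α f) := by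
  simp only [push1'', (G.map α).map1_comp, CrossedGroupoid.comp_hcast]

theorem push1''_inv {i j : Fin (p + 1)} (f : (G.obj p).Hom (G.X x p i) (G.X x' p j)) :
    G.push1'' α ((G.obj p).inv f) = (G.obj q).inv (G.push1'' α f) := by
  simp only [push1'', (G.map α).map1_inv, CrossedGroupoid.inv_hcast]

theorem push1''_D {i : Fin (p + 1)} (a : (G.obj p).G2 (G.X x p i)) :
    G.push1'' α ((G.obj p).D a) = (G.obj q).D (G.push2 α a) := by
  simp only [push1'', push2, (G.map α).map_D, CrossedGroupoid.D_cast2]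

theorem push2_mul {i : Fin (p + 1)} (a b : (G.obj p).G2 (G.X x p i)) :
    G.push2 α ((G.obj p).mul a b) = (G.obj q).mul (G.push2 α a) (G.push2 α b) := by
  simp only [push2, (G.map α).map2_mul, CrossedGroupoid.mul_cast2]

theorem push2_inv2 {i : Fin (p + 1)} (a : (G.obj p).G2 (G.X x p i)) :
    G.push2 α ((G.obj p).inv2 a) = (G.obj q).inv2 (G.push2 α a) := by
  simp only [push2, (G.map α).map2_inv2, CrossedGroupoid.inv2_cast2]

theorem push2_Ad {i j : Fin (p + 1)} (g : (G.obj p).Hom (G.X x p i) (G.X x' p j))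
    (a : (G.obj p).G2 (G.X x p i)) :
    G.push2 α ((G.obj p).Ad g a) = (G.obj q).Ad (G.push1'' α g) (G.push2 α a) := by
  simp only [push2, push1'', (G.map α).map_Ad, CrossedGroupoid.Ad_hcast]

theorem push1''_push1'' {r : ℕ} (β : Fin (q + 1) →o Fin (r + 1)) {i j : Fin (p + 1)}
    (g : (G.obj p).Hom (G.X x p i) (G.X x' p j)) :
    G.push1'' β (G.push1'' α g) = G.push1'' (β.comp α) g := by
  simp only [push1'', map1_hcast, CrossedGroupoid.hcast_hcast,
    map1_congr (G.map_comp β α).symm g]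
  rfl

theorem push2_push2 {r : ℕ} (β : Fin (q + 1) →o Fin (r + 1)) {i : Fin (p + 1)}
    (a : (G.obj p).G2 (G.X x p i)) :
    G.push2 β (G.push2 α a) = G.push2 (β.comp α) a := by
  simp only [push2, map2_cast2, CrossedGroupoid.cast2_cast2,
    map2_congr (G.map_comp β α).symm a]
  rfl

theorem push1''_congr {α α' : Fin (p + 1) →o Fin (q + 1)} (h : α = α') {i j : Fin (p + 1)}
    (g : (G.obj p).Hom (G.X x p i) (G.X x' p j)) :
    HEq (G.push1'' α g) (G.push1'' α' g) := by subst h; rfl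

theorem push2_congr {α α' : Fin (p + 1) →o Fin (q + 1)} (h : α = α') {i : Fin (p + 1)}
    (a : (G.obj p).G2 (G.X x p i)) :
    HEq (G.push2 α a) (G.push2 α' a) := by subst h; rfl

theorem push1''_vtx (f : (G.obj 0).Hom x x') (i : Fin (p + 1)) :
    G.push1'' α ((G.map (vtxMap i)).map1 f) = (G.map (vtxMap (α i))).map1 f := by
  show _ = (G.map (α.comp (vtxMap i))).map1 f
  rw [map1_congr (G.map_comp α (vtxMap i)).symm f]
  simp only [push1'', CrossedGroupoid.hcast_hcast]
  rfl

end CosimplicialCrossedGroupoid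
/-! ### More groupoid lemmas and simplicial combinatorics -/

namespace CrossedGroupoid

variable {K : CrossedGroupoid}

theorem comp_inv_cancel_left {x y z : K.Obj} (f : K.Hom y z) (g : K.Hom x y) :
    K.comp (K.inv f) (K.comp f g) = g := by
  rw [← K.comp_assoc, K.inv_comp, K.id_comp]

theorem inv_comp_cancel_left {x y z : K.Obj} (f : K.Hom z y) (g : K.Hom x y) :
    K.comp f (K.comp (K.inv f) g) = g := by
  rw [← K.comp_assoc, K.comp_inv, K.id_comp]

theorem Ad_inv_Ad {x y : K.Obj} (f : K.Hom x y) (a : K.G2 x) :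
    K.Ad (K.inv f) (K.Ad f a) = a := by
  rw [← K.Ad_comp, K.inv_comp, K.Ad_id]

theorem Ad_Ad_inv {x y : K.Obj} (f : K.Hom x y) (a : K.G2 y) :
    K.Ad f (K.Ad (K.inv f) a) = a := by
  rw [← K.Ad_comp, K.comp_inv, K.Ad_id]

theorem Ad_inj {x y : K.Obj} (f : K.Hom x y) {a b : K.G2 x}
    (h : K.Ad f a = K.Ad f b) : a = b := by
  have := congrArg (K.Ad (K.inv f)) h
  rwa [Ad_inv_Ad, Ad_inv_Ad] at this

/-- `u⁻¹ * w * u = Ad (D u)⁻¹ w` (conjugation form of the Peiffer identity). -/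
theorem peiffer_conj {x : K.Obj} (u w : K.G2 x) :
    u⁻¹ * w * u = K.Ad (K.inv (K.D u)) w := by
  have h := K.peiffer (K.inv2 u) w
  rw [D_inv2] at h
  rw [h, inv2_def, inv2_def, inv_inv, mul_def, mul_def]

end CrossedGroupoid

theorem edgeMap_app0 {q : ℕ} (i j : Fin (q + 1)) (h : i ≤ j) : edgeMap i j h 0 = i := rfl
theorem edgeMap_app1 {q : ℕ} (i j : Fin (q + 1)) (h : i ≤ j) : edgeMap i j h 1 = j := rfl
theorem triMap_app0 {q : ℕ} (i j k : Fin (q + 1)) (hij : i ≤ j) (hjk : j ≤ k) :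
    triMap i j k hij hjk 0 = i := rfl
theorem triMap_app1 {q : ℕ} (i j k : Fin (q + 1)) (hij : i ≤ j) (hjk : j ≤ k) :
    triMap i j k hij hjk 1 = j := rfl
theorem triMap_app2 {q : ℕ} (i j k : Fin (q + 1)) (hij : i ≤ j) (hjk : j ≤ k) :
    triMap i j k hij hjk 2 = k := rfl

theorem triMap_comp_edge01 {q : ℕ} (i j k : Fin (q + 1)) (hij : i ≤ j) (hjk : j ≤ k)
    (h : (0 : Fin 3) ≤ 1) :
    (triMap i j k hij hjk).comp (edgeMap 0 1 h) = edgeMap i j hij :=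
  OrderHom.ext _ _ (funext fun m => by fin_cases m <;> rfl)

theorem triMap_comp_edge02 {q : ℕ} (i j k : Fin (q + 1)) (hij : i ≤ j) (hjk : j ≤ k)
    (h : (0 : Fin 3) ≤ 2) :
    (triMap i j k hij hjk).comp (edgeMap 0 2 h) = edgeMap i k (hij.trans hjk) :=
  OrderHom.ext _ _ (funext fun m => by fin_cases m <;> rfl)

theorem triMap_comp_edge12 {q : ℕ} (i j k : Fin (q + 1)) (hij : i ≤ j) (hjk : j ≤ k)
    (h : (1 : Fin 3) ≤ 2) :
    (triMap i j k hij hjk).comp (edgeMap 1 2 h) = edgeMap j k hjk :=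
  OrderHom.ext _ _ (funext fun m => by fin_cases m <;> rfl)
/-! ### Gauge transformations preserve descent -/

namespace CosimplicialCrossedGroupoid

open CrossedGroupoid CrossedGroupoidHom

variable {G : CosimplicialCrossedGroupoid} {x x' : (G.obj 0).Obj}

/-- Pushing the gauge-transformed 1-morphism along an edge. -/
theorem push_gauge_edge (f : (G.obj 0).Hom x x')
    (g : (G.obj 1).Hom (G.X x 1 0) (G.X x 1 1)) (c : (G.obj 1).G2 (G.X x 1 0))
    {q : ℕ} (i j : Fin (q + 1)) (h : i ≤ j) :
    G.push1'' (edgeMap i j h) ((G.obj 1).comp ((G.obj 1).comp ((G.obj 1).comp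
        ((G.map (vtxMap (1 : Fin 2))).map1 f) g) ((G.obj 1).D c))
        ((G.obj 1).inv ((G.map (vtxMap (0 : Fin 2))).map1 f)))
    = (G.obj q).comp ((G.obj q).comp ((G.obj q).comp ((G.map (vtxMap j)).map1 f)
        (G.push1'' (edgeMap i j h) g)) ((G.obj q).D (G.push2 (edgeMap i j h) c)))
        ((G.obj q).inv ((G.map (vtxMap i)).map1 f)) := by
  rw [push1''_comp, push1''_comp, push1''_comp, push1''_inv, push1''_D,
    push1''_vtx, push1''_vtx]
  rfl

/-- The 1-cocycle-failure condition, pushed along a triangle. -/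
theorem push_cocycle_tri {g : (G.obj 1).Hom (G.X x 1 0) (G.X x 1 1)}
    {a : (G.obj 2).G2 (G.X x 2 0)}
    (hd1 : (G.obj 2).comp ((G.obj 2).comp
        ((G.obj 2).inv (G.push1 (edgeMap 0 2 (by decide)) g))
        (G.push1 (edgeMap 1 2 (by decide)) g)) (G.push1 (edgeMap 0 1 (by decide)) g)
      = (G.obj 2).D a)
    {q : ℕ} (i j k : Fin (q + 1)) (hij : i ≤ j) (hjk : j ≤ k) :
    (G.obj q).comp ((G.obj q).comp
        ((G.obj q).inv (G.push1'' (edgeMap i k (hij.trans hjk)) g))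
        (G.push1'' (edgeMap j k hjk) g)) (G.push1'' (edgeMap i j hij) g)
      = (G.obj q).D (G.push2 (triMap i j k hij hjk) a) := by
  have h := congrArg (G.push1'' (triMap i j k hij hjk)) hd1
  rw [push1_eq_push1'', push1_eq_push1'', push1_eq_push1''] at h
  rw [push1''_comp, push1''_comp, push1''_inv, push1''_D,
    push1''_push1'', push1''_push1'', push1''_push1''] at h
  rw [eq_of_heq (G.push1''_congr (triMap_comp_edge02 i j k hij hjk (by decide)) g),
    eq_of_heq (G.push1''_congr (triMap_comp_edge12 i j k hij hjk (by decide)) g),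
    eq_of_heq (G.push1''_congr (triMap_comp_edge01 i j k hij hjk (by decide)) g)] at h
  exact h

/-- The gauge-transformed 2-morphism, pushed along a triangle. -/
theorem push_transportA_tri (f : (G.obj 0).Hom x x')
    (g : (G.obj 1).Hom (G.X x 1 0) (G.X x 1 1)) (a : (G.obj 2).G2 (G.X x 2 0))
    (c : (G.obj 1).G2 (G.X x 1 0)) {q : ℕ} (i j k : Fin (q + 1))
    (hij : i ≤ j) (hjk : j ≤ k) :
    G.push2 (triMap i j k hij hjk) (G.transportA f g a c)
    = (G.obj q).Ad ((G.map (vtxMap i)).map1 f)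
        ((G.obj q).mul ((G.obj q).mul ((G.obj q).mul
          ((G.obj q).inv2 (G.push2 (edgeMap i k (hij.trans hjk)) c))
          (G.push2 (triMap i j k hij hjk) a))
          ((G.obj q).Ad ((G.obj q).inv (G.push1'' (edgeMap i j hij) g))
            (G.push2 (edgeMap j k hjk) c)))
        (G.push2 (edgeMap i j hij) c)) := by
  rw [transportA, push1_eq_push1'']
  rw [push2_Ad, push2_mul, push2_mul, push2_mul, push2_inv2, push2_Ad,
    push1''_inv, push1''_vtx, push1''_push1'',
    push2_push2, push2_push2, push2_push2]
  rw [eq_of_heq (G.push2_congr (triMap_comp_edge02 i j k hij hjk (by decide)) c),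
    eq_of_heq (G.push2_congr (triMap_comp_edge12 i j k hij hjk (by decide)) c),
    eq_of_heq (G.push2_congr (triMap_comp_edge01 i j k hij hjk (by decide)) c),
    eq_of_heq (G.push1''_congr (triMap_comp_edge01 i j k hij hjk (by decide)) g)]
  rfl

/-- The abstract tetrahedron computation in a crossed groupoid. -/
theorem tetra_abstract {K : CrossedGroupoid} {X0 X1 X2 : K.Obj}
    (G01 : K.Hom X0 X1) (G12 : K.Hom X1 X2) (G02 : K.Hom X0 X2)
    (A012 A013 A023 : K.G2 X0) (A123 : K.G2 X1)
    (C01 C02 C03 : K.G2 X0) (C12 C13 : K.G2 X1) (C23 : K.G2 X2)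
    (hDa : K.D A012 = K.comp (K.comp (K.inv G02) G12) G01)
    (hd2 : K.mul (K.mul (K.inv2 A013) A023) A012 = K.Ad (K.inv G01) A123) :
    K.mul (K.mul
      (K.inv2 (K.mul (K.mul (K.mul (K.inv2 C03) A013) (K.Ad (K.inv G01) C13)) C01))
      (K.mul (K.mul (K.mul (K.inv2 C03) A023) (K.Ad (K.inv G02) C23)) C02))
      (K.mul (K.mul (K.mul (K.inv2 C02) A012) (K.Ad (K.inv G01) C12)) C01)
    = K.mul (K.mul (K.inv2 C01)
        (K.Ad (K.inv G01)
          (K.mul (K.mul (K.mul (K.inv2 C13) A123) (K.Ad (K.inv G12) C23)) C12)))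
        (K.inv2 (K.inv2 C01)) := by
  have key1 : A012⁻¹ * (K.Ad (K.inv G02) C23) * A012
      = K.Ad (K.comp (K.inv G01) (K.inv G12)) C23 := by
    rw [CrossedGroupoid.peiffer_conj, ← K.Ad_comp, hDa]
    have harg : K.comp (K.inv (K.comp (K.comp (K.inv G02) G12) G01)) (K.inv G02)
        = K.comp (K.inv G01) (K.inv G12) := by
      simp only [K.comp_assoc, CrossedGroupoid.inv_comp', CrossedGroupoid.inv_inv',
        CrossedGroupoid.comp_inv_cancel_left, CrossedGroupoid.inv_comp_cancel_left,
        K.id_comp, K.comp_id, K.inv_comp, K.comp_inv]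
    rw [harg]
  have key2 : K.Ad (K.inv G01) A123 = A013⁻¹ * A023 * A012 := by
    rw [← hd2]; simp only [CrossedGroupoid.mul_def, CrossedGroupoid.inv2_def,
      _root_.mul_assoc]
  simp only [K.Ad_mul, CrossedGroupoid.Ad_inv2]
  rw [← K.Ad_comp]
  simp only [CrossedGroupoid.mul_def, CrossedGroupoid.inv2_def]
  rw [key2, ← key1]
  group

/-- Gauge transformations preserve the descent conditions (Yekutieli Lemma 1.9). -/
theorem isDescent_gauge (f : (G.obj 0).Hom x x')
    {g : (G.obj 1).Hom (G.X x 1 0) (G.X x 1 1)} {a : (G.obj 2).G2 (G.X x 2 0)}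
    (c : (G.obj 1).G2 (G.X x 1 0)) (hd : G.IsDescent x g a) :
    G.IsDescent x' ((G.obj 1).comp ((G.obj 1).comp ((G.obj 1).comp
        ((G.map (vtxMap (1 : Fin 2))).map1 f) g) ((G.obj 1).D c))
        ((G.obj 1).inv ((G.map (vtxMap (0 : Fin 2))).map1 f)))
      (G.transportA f g a c) := by
  obtain ⟨hd1, hd2⟩ := hd
  constructor
  · -- the twisted 1-cocycle condition
    rw [push1_eq_push1'', push1_eq_push1'', push1_eq_push1'',
      push_gauge_edge, push_gauge_edge, push_gauge_edge]
    rw [transportA, push1_eq_push1'', (G.obj 2).D_Ad,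
      (G.obj 2).D_mul, (G.obj 2).D_mul, (G.obj 2).D_mul, (G.obj 2).D_Ad, D_inv2,
      ← hd1]
    simp only [push1_eq_push1'', (G.obj 2).comp_assoc, inv_comp', inv_inv', comp_inv_cancel_left,
      inv_comp_cancel_left, (G.obj 2).id_comp, (G.obj 2).comp_id,
      (G.obj 2).inv_comp, (G.obj 2).comp_inv]
  · -- the twisted 2-cocycle condition
    rw [push1_eq_push1'', push_gauge_edge,
      push_transportA_tri f g a c 0 1 3 (by decide) (by decide),
      push_transportA_tri f g a c 0 2 3 (by decide) (by decide),
      push_transportA_tri f g a c 0 1 2 (by decide) (by decide),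
      push_transportA_tri f g a c 1 2 3 (by decide) (by decide)]
    rw [push1_eq_push1''] at hd2
    set K := G.obj 3 with hK
    -- right-hand side: strip the conjugation down to `Ad F0`
    rw [inv_comp', inv_comp', inv_comp', inv_inv', K.Ad_comp, K.Ad_comp, K.Ad_comp,
      Ad_inv_Ad]
    rw [← D_inv2, K.peiffer]
    -- left-hand side: pull everything inside `Ad F0`
    rw [← Ad_inv2, ← K.Ad_mul, ← K.Ad_mul]
    exact congrArg (K.Ad ((G.map (vtxMap (0 : Fin 4))).map1 f))
      (tetra_abstract _ _ _ _ _ _ _ _ _ _ _ _ _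
        (push_cocycle_tri hd1 (0 : Fin 4) 1 2 (by decide) (by decide)).symm hd2)

end CosimplicialCrossedGroupoid
/-! ### Quotient utilities for π₀ and π₁ -/

namespace CrossedGroupoid

variable {K : CrossedGroupoid}

theorem pi0Rel_equivalence (K : CrossedGroupoid) : Equivalence K.pi0Rel where
  refl x := ⟨K.id x⟩
  symm h := ⟨K.inv h.some⟩
  trans h1 h2 := ⟨K.comp h2.some h1.some⟩

theorem pi0_mk_eq {x y : K.Obj} (h : Quot.mk K.pi0Rel x = Quot.mk K.pi0Rel y) :
    K.pi0Rel x y :=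
  (K.pi0Rel_equivalence.eqvGen_iff).mp (Quot.eqvGen_exact h)

theorem homRel_equivalence (K : CrossedGroupoid) (x x' : K.Obj) :
    Equivalence (K.homRel x x') where
  refl g := ⟨K.one x, by rw [K.D_one, K.comp_id]⟩
  symm := by
    rintro g g' ⟨a, rfl⟩
    refine ⟨K.inv2 a, ?_⟩
    rw [K.comp_assoc, ← K.D_mul, mul_def, inv2_def, mul_inv_cancel, ← one_def,
      K.D_one, K.comp_id]
  trans := by
    rintro g g' g'' ⟨a, rfl⟩ ⟨b, rfl⟩
    exact ⟨K.mul a b, by rw [K.comp_assoc, ← K.D_mul]⟩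

theorem homRel_mk_eq {x x' : K.Obj} {g g' : K.Hom x x'}
    (h : Quot.mk (K.homRel x x') g = Quot.mk (K.homRel x x') g') :
    ∃ a : K.G2 x, g' = K.comp g (K.D a) :=
  ((K.homRel_equivalence x x').eqvGen_iff).mp (Quot.eqvGen_exact h)

end CrossedGroupoid

/-! ### Naturality transport for morphisms of cosimplicial crossed groupoids -/

namespace CosimplicialMor

open CrossedGroupoid CrossedGroupoidHom CosimplicialCrossedGroupoid

variable {G H : CosimplicialCrossedGroupoid} (F : CosimplicialMor G H)

/-- The object-level naturality square. -/
theorem natObj {p q : ℕ} (α : Fin (p + 1) →o Fin (q + 1)) (X : (G.obj p).Obj) :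
    (F.app q).obj ((G.map α).obj X) = (H.map α).obj ((F.app p).obj X) :=
  congrFun (congrArg CrossedGroupoidHom.obj (F.naturality α)) X

theorem push_app1 {x x' : (G.obj 0).Obj} {p q : ℕ} (α : Fin (p + 1) →o Fin (q + 1))
    {i j : Fin (p + 1)} (g : (G.obj p).Hom (G.X x p i) (G.X x' p j)) :
    H.push1'' α ((H.obj p).hcast (F.app_X x p i) (F.app_X x' p j) ((F.app p).map1 g))
    = (H.obj q).hcast (F.app_X x q (α i)) (F.app_X x' q (α j))
        ((F.app q).map1 (G.push1'' α g)) := by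
  simp only [push1'', map1_hcast, CrossedGroupoid.hcast_hcast]
  have h2 : (H.map α).map1 ((F.app p).map1 g)
      = (H.obj q).hcast (F.natObj α (G.X x p i)) (F.natObj α (G.X x' p j))
        ((F.app q).map1 ((G.map α).map1 g)) := map1_congr (F.naturality α) g
  rw [h2, CrossedGroupoid.hcast_hcast]

theorem push_app2 {x : (G.obj 0).Obj} {p q : ℕ} (α : Fin (p + 1) →o Fin (q + 1))
    {i : Fin (p + 1)} (a : (G.obj p).G2 (G.X x p i)) :
    H.push2 α ((H.obj p).cast2 (F.app_X x p i) ((F.app p).map2 a))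
    = (H.obj q).cast2 (F.app_X x q (α i)) ((F.app q).map2 (G.push2 α a)) := by
  simp only [push2, map2_cast2, CrossedGroupoid.cast2_cast2]
  have h2 : (H.map α).map2 ((F.app p).map2 a)
      = (H.obj q).cast2 (F.natObj α (G.X x p i)) ((F.app q).map2 ((G.map α).map2 a)) :=
    map2_congr (F.naturality α) a
  rw [h2, CrossedGroupoid.cast2_cast2]

end CosimplicialMor
/-! ### Helper lemmas for the main surjectivity construction -/

namespace CrossedGroupoid

/-- Solving the gauge equation for the 1-morphism. -/
theorem gauge_solve {K : CrossedGroupoid} {Y0 Y1 Y0' Y1' : K.Obj}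
    (f0 : K.Hom Y0 Y0') (f1 : K.Hom Y1 Y1') (h : K.Hom Y0 Y1) (m : K.Hom Y0' Y1')
    (d : K.G2 Y0')
    (e1 : K.comp (K.comp f1 h) (K.inv f0) = K.comp m (K.D d)) :
    m = K.comp (K.comp (K.comp f1 h) (K.D (K.Ad (K.inv f0) (K.inv2 d)))) (K.inv f0) := by
  have e2 : K.comp (K.comp (K.comp f1 h) (K.inv f0)) (K.inv (K.D d)) = m := by
    rw [e1, K.comp_assoc, K.comp_inv, K.comp_id]
  rw [← e2, K.D_Ad, D_inv2, inv_inv']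
  simp only [K.comp_assoc, inv_comp', inv_inv', comp_inv_cancel_left,
    inv_comp_cancel_left, K.id_comp, K.comp_id, K.inv_comp, K.comp_inv]

/-- The feedback of the tetrahedron discrepancy is trivial. -/
theorem tetra_D_abstract {K : CrossedGroupoid} {X0 X1 X2 X3 : K.Obj}
    (G01 : K.Hom X0 X1) (G12 : K.Hom X1 X2) (G02 : K.Hom X0 X2)
    (G13 : K.Hom X1 X3) (G23 : K.Hom X2 X3) (G03 : K.Hom X0 X3)
    (A012 A013 A023 : K.G2 X0) (A123 : K.G2 X1)
    (h012 : K.D A012 = K.comp (K.comp (K.inv G02) G12) G01)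
    (h013 : K.D A013 = K.comp (K.comp (K.inv G03) G13) G01)
    (h023 : K.D A023 = K.comp (K.comp (K.inv G03) G23) G02)
    (h123 : K.D A123 = K.comp (K.comp (K.inv G13) G23) G12) :
    K.D (K.mul (K.mul (K.inv2 A013) A023) A012) = K.D (K.Ad (K.inv G01) A123) := by
  rw [K.D_mul, K.D_mul, D_inv2, K.D_Ad, h012, h013, h023, h123, inv_inv']
  simp only [K.comp_assoc, inv_comp', inv_inv', comp_inv_cancel_left,
    inv_comp_cancel_left, K.id_comp, K.comp_id, K.inv_comp, K.comp_inv]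

theorem eq_of_mul_inv2_eq_one {K : CrossedGroupoid} {X : K.Obj} {a b : K.G2 X}
    (h : K.mul a (K.inv2 b) = K.one X) : a = b := by
  rw [mul_def, inv2_def, one_def] at h
  exact mul_inv_eq_one.mp h

end CrossedGroupoid

namespace CosimplicialMor

open CrossedGroupoid CrossedGroupoidHom CosimplicialCrossedGroupoid

variable {G H : CosimplicialCrossedGroupoid} (F : CosimplicialMor G H)

/-- The cocycle of `F.mapG g` is the `F`-image of the cocycle of `g`. -/
theorem cocycle_mapG {x0 : (G.obj 0).Obj} (g : (G.obj 1).Hom (G.X x0 1 0) (G.X x0 1 1)) :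
    (H.obj 2).comp ((H.obj 2).comp
        ((H.obj 2).inv (H.push1 (edgeMap 0 2 (by decide)) (F.mapG g)))
        (H.push1 (edgeMap 1 2 (by decide)) (F.mapG g)))
      (H.push1 (edgeMap 0 1 (by decide)) (F.mapG g))
    = (H.obj 2).hcast (F.app_X x0 2 0) (F.app_X x0 2 0)
        ((F.app 2).map1 ((G.obj 2).comp ((G.obj 2).comp
          ((G.obj 2).inv (G.push1 (edgeMap 0 2 (by decide)) g))
          (G.push1 (edgeMap 1 2 (by decide)) g)) (G.push1 (edgeMap 0 1 (by decide)) g))) := by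
  simp only [push1_eq_push1'', CosimplicialMor.mapG, push_app1,
    CrossedGroupoid.inv_hcast, ← (F.app 2).map1_inv, CrossedGroupoid.comp_hcast,
    ← (F.app 2).map1_comp]

/-- Pushing `F.mapA a` along a triangle. -/
theorem tri_mapA {x0 : (G.obj 0).Obj} (a : (G.obj 2).G2 (G.X x0 2 0))
    (i j k : Fin 4) (hij : i ≤ j) (hjk : j ≤ k) :
    H.push2 (triMap i j k hij hjk) (F.mapA a)
    = (H.obj 3).cast2 (F.app_X x0 3 i)
        ((F.app 3).map2 (G.push2 (triMap i j k hij hjk) a)) := by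
  simp only [CosimplicialMor.mapA, push_app2]

end CosimplicialMor
/-- surjectivity half of the main theorem: every descent datum in H
is gauge equivalent to the image of a descent datum in G. -/
theorem main_surjective {G H : CosimplicialCrossedGroupoid} (F : CosimplicialMor G H)
    (hF : F.IsWeakEquiv) :
    ∀ Q : H.Desc, ∃ (P : G.Desc) (f : (H.obj 0).Hom Q.x (F.objD P.x))
      (c : (H.obj 1).G2 (H.X Q.x 1 0)),
      H.IsGauge Q.x Q.g Q.a (F.objD P.x) (F.mapG P.g) (F.mapA P.a) f c := by
  intro Q
  -- Step 1: find x0 with F(x0) isomorphic to Q.x, and an iso f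
  obtain ⟨x0, hf⟩ : ∃ x0 : (G.obj 0).Obj,
      Nonempty ((H.obj 0).Hom Q.x (F.objD x0)) := by
    obtain ⟨p, hp⟩ := (hF 0).1.2 (Quot.mk _ Q.x)
    obtain ⟨x0, rfl⟩ := Quot.exists_rep p
    exact ⟨x0, ⟨(H.obj 0).inv (CrossedGroupoid.pi0_mk_eq hp).some⟩⟩
  obtain ⟨f⟩ := hf
  -- Step 2: connect the two vertex objects of x0 in G¹
  obtain ⟨g0⟩ : Nonempty ((G.obj 1).Hom (G.X x0 1 0) (G.X x0 1 1)) := by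
    have hxy : (Quot.mk _ (G.X x0 1 0) : (G.obj 1).pi0) = Quot.mk _ (G.X x0 1 1) := by
      apply (hF 1).1.1
      apply Quot.sound
      exact ⟨(H.obj 1).hcast (F.app_X x0 1 0).symm (F.app_X x0 1 1).symm
        ((H.obj 1).comp ((H.obj 1).comp ((H.map (vtxMap (1 : Fin 2))).map1 f) Q.g)
          ((H.obj 1).inv ((H.map (vtxMap (0 : Fin 2))).map1 f)))⟩
    exact ⟨(CrossedGroupoid.pi0_mk_eq hxy).some⟩
  -- Step 3: lift the conjugated 1-morphism modulo D
  obtain ⟨g, cH2, hg1⟩ : ∃ (g : (G.obj 1).Hom (G.X x0 1 0) (G.X x0 1 1))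
      (cH2 : (H.obj 1).G2 ((F.app 1).obj (G.X x0 1 0))),
      (H.obj 1).hcast (F.app_X x0 1 0).symm (F.app_X x0 1 1).symm
          ((H.obj 1).comp ((H.obj 1).comp ((H.map (vtxMap (1 : Fin 2))).map1 f) Q.g)
            ((H.obj 1).inv ((H.map (vtxMap (0 : Fin 2))).map1 f)))
        = (H.obj 1).comp ((F.app 1).map1 g) ((H.obj 1).D cH2) := by
    set h2 := (H.obj 1).hcast (F.app_X x0 1 0).symm (F.app_X x0 1 1).symm
      ((H.obj 1).comp ((H.obj 1).comp ((H.map (vtxMap (1 : Fin 2))).map1 f) Q.g)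
        ((H.obj 1).inv ((H.map (vtxMap (0 : Fin 2))).map1 f))) with hh2
    obtain ⟨p, hp⟩ := ((hF 1).2.1 (G.X x0 1 1)).2
      (Quot.mk _ ((H.obj 1).comp h2 ((H.obj 1).inv ((F.app 1).map1 g0))))
    obtain ⟨u, rfl⟩ := Quot.exists_rep p
    obtain ⟨cH, hcH⟩ := CrossedGroupoid.homRel_mk_eq hp
    refine ⟨(G.obj 1).comp u g0,
      (H.obj 1).Ad ((H.obj 1).inv ((F.app 1).map1 g0)) cH, ?_⟩
    have e2 : h2 = (H.obj 1).comp ((H.obj 1).comp ((F.app 1).map1 u)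
        ((H.obj 1).D cH)) ((F.app 1).map1 g0) := by
      have e3 : (H.obj 1).comp ((H.obj 1).comp h2 ((H.obj 1).inv ((F.app 1).map1 g0)))
          ((F.app 1).map1 g0) = h2 := by
        rw [(H.obj 1).comp_assoc, (H.obj 1).inv_comp, (H.obj 1).comp_id]
      rw [← e3, hcH]
    rw [e2, (F.app 1).map1_comp, (H.obj 1).D_Ad]
    simp only [(H.obj 1).comp_assoc, CrossedGroupoid.inv_comp', CrossedGroupoid.inv_inv', CrossedGroupoid.comp_inv_cancel_left,
      CrossedGroupoid.inv_comp_cancel_left, (H.obj 1).id_comp, (H.obj 1).comp_id,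
      (H.obj 1).inv_comp, (H.obj 1).comp_inv]
  -- Step 4: the gauge 2-morphism c and the first gauge condition
  have hgauge1 : F.mapG g = (H.obj 1).comp ((H.obj 1).comp ((H.obj 1).comp
      ((H.map (vtxMap (1 : Fin 2))).map1 f) Q.g)
      ((H.obj 1).D ((H.obj 1).Ad ((H.obj 1).inv ((H.map (vtxMap (0 : Fin 2))).map1 f))
        ((H.obj 1).inv2 ((H.obj 1).cast2 (F.app_X x0 1 0) cH2)))))
      ((H.obj 1).inv ((H.map (vtxMap (0 : Fin 2))).map1 f)) := by
    have e1 : (H.obj 1).comp ((H.obj 1).comp ((H.map (vtxMap (1 : Fin 2))).map1 f) Q.g)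
        ((H.obj 1).inv ((H.map (vtxMap (0 : Fin 2))).map1 f))
        = (H.obj 1).comp (F.mapG g)
            ((H.obj 1).D ((H.obj 1).cast2 (F.app_X x0 1 0) cH2)) := by
      have e0 := congrArg ((H.obj 1).hcast (F.app_X x0 1 0) (F.app_X x0 1 1)) hg1
      rw [CrossedGroupoid.hcast_hcast,
        ← CrossedGroupoid.comp_hcast (F.app_X x0 1 0) (F.app_X x0 1 0) (F.app_X x0 1 1),
        ← CrossedGroupoid.D_cast2] at e0
      exact e0
    exact CrossedGroupoid.gauge_solve _ _ Q.g (F.mapG g) _ e1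
  -- Step 5: descent in H for the transported pair
  have hDH : H.IsDescent (F.objD x0) (F.mapG g)
      (H.transportA f Q.g Q.a
        ((H.obj 1).Ad ((H.obj 1).inv ((H.map (vtxMap (0 : Fin 2))).map1 f))
          ((H.obj 1).inv2 ((H.obj 1).cast2 (F.app_X x0 1 0) cH2)))) := by
    have hd := CosimplicialCrossedGroupoid.isDescent_gauge (x' := F.objD x0) f
      ((H.obj 1).Ad ((H.obj 1).inv ((H.map (vtxMap (0 : Fin 2))).map1 f))
        ((H.obj 1).inv2 ((H.obj 1).cast2 (F.app_X x0 1 0) cH2))) Q.isDescent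
    rwa [← hgauge1] at hd
  set bH := H.transportA f Q.g Q.a
    ((H.obj 1).Ad ((H.obj 1).inv ((H.map (vtxMap (0 : Fin 2))).map1 f))
      ((H.obj 1).inv2 ((H.obj 1).cast2 (F.app_X x0 1 0) cH2))) with hbH
  -- Step 6: the F-image of the G-side cocycle equals D bH
  have hFe : (H.obj 2).hcast (F.app_X x0 2 0) (F.app_X x0 2 0) ((F.app 2).map1
      ((G.obj 2).comp ((G.obj 2).comp
        ((G.obj 2).inv (G.push1 (edgeMap 0 2 (by decide)) g))
        (G.push1 (edgeMap 1 2 (by decide)) g)) (G.push1 (edgeMap 0 1 (by decide)) g)))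
      = (H.obj 2).D bH := (F.cocycle_mapG g).symm.trans hDH.1
  -- Step 7: trivialize the G-side cocycle using π₁-injectivity
  obtain ⟨a0, ha0⟩ : ∃ a0 : (G.obj 2).G2 (G.X x0 2 0),
      (G.obj 2).comp ((G.obj 2).comp
        ((G.obj 2).inv (G.push1 (edgeMap 0 2 (by decide)) g))
        (G.push1 (edgeMap 1 2 (by decide)) g)) (G.push1 (edgeMap 0 1 (by decide)) g)
      = (G.obj 2).D a0 := by
    have hq : (Quot.mk _ ((G.obj 2).id (G.X x0 2 0)) : (G.obj 2).pi1 (G.X x0 2 0))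
        = Quot.mk _ ((G.obj 2).comp ((G.obj 2).comp
            ((G.obj 2).inv (G.push1 (edgeMap 0 2 (by decide)) g))
            (G.push1 (edgeMap 1 2 (by decide)) g))
            (G.push1 (edgeMap 0 1 (by decide)) g)) := by
      apply ((hF 2).2.1 (G.X x0 2 0)).1
      apply Quot.sound
      refine ⟨(H.obj 2).cast2 (F.app_X x0 2 0).symm bH, ?_⟩
      rw [(F.app 2).map1_id, (H.obj 2).id_comp, CrossedGroupoid.D_cast2]
      have e4 := congrArg
        ((H.obj 2).hcast (F.app_X x0 2 0).symm (F.app_X x0 2 0).symm) hFe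
      rw [CrossedGroupoid.hcast_hcast] at e4
      exact e4
    obtain ⟨a0', ha0'⟩ := CrossedGroupoid.homRel_mk_eq hq
    exact ⟨a0', by rw [ha0', (G.obj 2).id_comp]⟩
  -- Step 8: correct a0 by a π₂-element
  obtain ⟨τ, hτD, hτF⟩ : ∃ τ : (G.obj 2).G2 (G.X x0 2 0),
      (G.obj 2).D τ = (G.obj 2).id (G.X x0 2 0) ∧
      (F.app 2).map2 τ = (H.obj 2).cast2 (F.app_X x0 2 0).symm
        ((H.obj 2).mul bH ((H.obj 2).inv2 ((H.obj 2).cast2 (F.app_X x0 2 0)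
          ((F.app 2).map2 a0)))) := by
    have hker : (H.obj 2).D ((H.obj 2).cast2 (F.app_X x0 2 0).symm
        ((H.obj 2).mul bH ((H.obj 2).inv2 ((H.obj 2).cast2 (F.app_X x0 2 0)
          ((F.app 2).map2 a0)))))
        = (H.obj 2).id ((F.app 2).obj (G.X x0 2 0)) := by
      rw [CrossedGroupoid.D_cast2, (H.obj 2).D_mul, CrossedGroupoid.D_inv2,
        CrossedGroupoid.D_cast2, ← (F.app 2).map_D, ← ha0, hFe,
        (H.obj 2).comp_inv, CrossedGroupoid.id_heq]
    obtain ⟨⟨τ, hτ⟩, hmap⟩ := ((hF 2).2.2 (G.X x0 2 0)).2 ⟨_, hker⟩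
    exact ⟨τ, hτ, congrArg Subtype.val hmap⟩
  -- Step 9: the two descent conditions for a := τ * a0
  have hcond1 : (G.obj 2).comp ((G.obj 2).comp
      ((G.obj 2).inv (G.push1 (edgeMap 0 2 (by decide)) g))
      (G.push1 (edgeMap 1 2 (by decide)) g)) (G.push1 (edgeMap 0 1 (by decide)) g)
      = (G.obj 2).D ((G.obj 2).mul τ a0) := by
    rw [(G.obj 2).D_mul, hτD, (G.obj 2).id_comp, ha0]
  have hFa : F.mapA ((G.obj 2).mul τ a0) = bH := by
    show (H.obj 2).cast2 (F.app_X x0 2 0) ((F.app 2).map2 ((G.obj 2).mul τ a0)) = bH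
    rw [(F.app 2).map2_mul, hτF, ← CrossedGroupoid.mul_cast2,
      CrossedGroupoid.cast2_cast2, CrossedGroupoid.cast2_refl']
    simp only [CrossedGroupoid.mul_def, CrossedGroupoid.inv2_def]
    group
  have hcond2 : (G.obj 3).mul ((G.obj 3).mul
      ((G.obj 3).inv2 (G.push2 (triMap 0 1 3 (by decide) (by decide))
        ((G.obj 2).mul τ a0)))
      (G.push2 (triMap 0 2 3 (by decide) (by decide)) ((G.obj 2).mul τ a0)))
      (G.push2 (triMap 0 1 2 (by decide) (by decide)) ((G.obj 2).mul τ a0))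
      = (G.obj 3).Ad ((G.obj 3).inv (G.push1 (edgeMap 0 1 (by decide)) g))
        (G.push2 (triMap 1 2 3 (by decide) (by decide)) ((G.obj 2).mul τ a0)) := by
    rw [CosimplicialCrossedGroupoid.push1_eq_push1'']
    -- the F-image of the discrepancy is trivial
    have hLR : (F.app 3).map2 ((G.obj 3).mul ((G.obj 3).mul
        ((G.obj 3).inv2 (G.push2 (triMap 0 1 3 (by decide) (by decide))
          ((G.obj 2).mul τ a0)))
        (G.push2 (triMap 0 2 3 (by decide) (by decide)) ((G.obj 2).mul τ a0)))
        (G.push2 (triMap 0 1 2 (by decide) (by decide)) ((G.obj 2).mul τ a0)))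
        = (F.app 3).map2 ((G.obj 3).Ad
          ((G.obj 3).inv (G.push1'' (edgeMap 0 1 (by decide)) g))
          (G.push2 (triMap 1 2 3 (by decide) (by decide)) ((G.obj 2).mul τ a0))) := by
      have h2 := hDH.2
      rw [← hFa] at h2
      rw [F.tri_mapA ((G.obj 2).mul τ a0) 0 1 3 (by decide) (by decide),
        F.tri_mapA ((G.obj 2).mul τ a0) 0 2 3 (by decide) (by decide),
        F.tri_mapA ((G.obj 2).mul τ a0) 0 1 2 (by decide) (by decide),
        F.tri_mapA ((G.obj 2).mul τ a0) 1 2 3 (by decide) (by decide),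
        CosimplicialCrossedGroupoid.push1_eq_push1''] at h2
      simp only [CosimplicialMor.mapG] at h2
      rw [CosimplicialMor.push_app1, CrossedGroupoid.inv2_cast2,
        CrossedGroupoid.mul_cast2, CrossedGroupoid.mul_cast2,
        CrossedGroupoid.inv_hcast, CrossedGroupoid.Ad_hcast] at h2
      have h3 := (CrossedGroupoid.cast2_inj (F.app_X x0 3 0)).mp h2
      rw [← (F.app 3).map2_inv2, ← (F.app 3).map2_mul, ← (F.app 3).map2_mul,
        ← (F.app 3).map1_inv, ← (F.app 3).map_Ad] at h3
      exact h3
    have hDLR : (G.obj 3).D ((G.obj 3).mul ((G.obj 3).mul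
        ((G.obj 3).inv2 (G.push2 (triMap 0 1 3 (by decide) (by decide))
          ((G.obj 2).mul τ a0)))
        (G.push2 (triMap 0 2 3 (by decide) (by decide)) ((G.obj 2).mul τ a0)))
        (G.push2 (triMap 0 1 2 (by decide) (by decide)) ((G.obj 2).mul τ a0)))
        = (G.obj 3).D ((G.obj 3).Ad
          ((G.obj 3).inv (G.push1'' (edgeMap 0 1 (by decide)) g))
          (G.push2 (triMap 1 2 3 (by decide) (by decide)) ((G.obj 2).mul τ a0))) :=
      CrossedGroupoid.tetra_D_abstract _ _ _ _ _ _ _ _ _ _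
        ((CosimplicialCrossedGroupoid.push_cocycle_tri hcond1 (0 : Fin 4) 1 2 (by decide) (by decide)).symm)
        ((CosimplicialCrossedGroupoid.push_cocycle_tri hcond1 (0 : Fin 4) 1 3 (by decide) (by decide)).symm)
        ((CosimplicialCrossedGroupoid.push_cocycle_tri hcond1 (0 : Fin 4) 2 3 (by decide) (by decide)).symm)
        ((CosimplicialCrossedGroupoid.push_cocycle_tri hcond1 (1 : Fin 4) 2 3 (by decide) (by decide)).symm)
    have hw : (G.obj 3).mul ((G.obj 3).mul ((G.obj 3).mul
        ((G.obj 3).inv2 (G.push2 (triMap 0 1 3 (by decide) (by decide))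
          ((G.obj 2).mul τ a0)))
        (G.push2 (triMap 0 2 3 (by decide) (by decide)) ((G.obj 2).mul τ a0)))
        (G.push2 (triMap 0 1 2 (by decide) (by decide)) ((G.obj 2).mul τ a0)))
        ((G.obj 3).inv2 ((G.obj 3).Ad
          ((G.obj 3).inv (G.push1'' (edgeMap 0 1 (by decide)) g))
          (G.push2 (triMap 1 2 3 (by decide) (by decide)) ((G.obj 2).mul τ a0))))
        = (G.obj 3).one (G.X x0 3 0) := by
      have hker : (G.obj 3).D ((G.obj 3).mul ((G.obj 3).mul ((G.obj 3).mul
          ((G.obj 3).inv2 (G.push2 (triMap 0 1 3 (by decide) (by decide))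
            ((G.obj 2).mul τ a0)))
          (G.push2 (triMap 0 2 3 (by decide) (by decide)) ((G.obj 2).mul τ a0)))
          (G.push2 (triMap 0 1 2 (by decide) (by decide)) ((G.obj 2).mul τ a0)))
          ((G.obj 3).inv2 ((G.obj 3).Ad
            ((G.obj 3).inv (G.push1'' (edgeMap 0 1 (by decide)) g))
            (G.push2 (triMap 1 2 3 (by decide) (by decide)) ((G.obj 2).mul τ a0)))))
          = (G.obj 3).id (G.X x0 3 0) := by
        rw [(G.obj 3).D_mul, CrossedGroupoid.D_inv2, hDLR, (G.obj 3).comp_inv]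
        rfl
      have hFw : (F.app 3).map2 ((G.obj 3).mul ((G.obj 3).mul ((G.obj 3).mul
          ((G.obj 3).inv2 (G.push2 (triMap 0 1 3 (by decide) (by decide))
            ((G.obj 2).mul τ a0)))
          (G.push2 (triMap 0 2 3 (by decide) (by decide)) ((G.obj 2).mul τ a0)))
          (G.push2 (triMap 0 1 2 (by decide) (by decide)) ((G.obj 2).mul τ a0)))
          ((G.obj 3).inv2 ((G.obj 3).Ad
            ((G.obj 3).inv (G.push1'' (edgeMap 0 1 (by decide)) g))
            (G.push2 (triMap 1 2 3 (by decide) (by decide)) ((G.obj 2).mul τ a0)))))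
          = (H.obj 3).one _ := by
        rw [(F.app 3).map2_mul, (F.app 3).map2_inv2, hLR]
        simp only [CrossedGroupoid.mul_def, CrossedGroupoid.inv2_def,
          CrossedGroupoid.one_def]
        group
      have hsub := ((hF 3).2.2 (G.X x0 3 0)).1
        (a₁ := ⟨_, hker⟩) (a₂ := ⟨(G.obj 3).one _, by rw [(G.obj 3).D_one]⟩)
        (Subtype.ext (by
          show (F.app 3).map2 _ = (F.app 3).map2 ((G.obj 3).one (G.X x0 3 0))
          rw [(F.app 3).map2_one, hFw]
          rfl))
      exact congrArg Subtype.val hsub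
    exact CrossedGroupoid.eq_of_mul_inv2_eq_one hw
  -- Step 10: assemble everything
  exact ⟨⟨x0, g, (G.obj 2).mul τ a0, ⟨hcond1, hcond2⟩⟩, f,
    (H.obj 1).Ad ((H.obj 1).inv ((H.map (vtxMap (0 : Fin 2))).map1 f))
      ((H.obj 1).inv2 ((H.obj 1).cast2 (F.app_X x0 1 0) cH2)),
    hgauge1, hFa⟩
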